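/- There exists a constant C > 0 such that for every measurable function u : ℝ³ → ℝ one has ∫_{ℝ³}∫_{ℝ³} u(x)² u(y)² / |x − y| dx dy ≤ C ( ∫_{ℝ³} |u(x)|^{12/5} dx )^{5/3}, where both sides are understood as integrals of nonnegative functions (possibly +∞). -/

import Mathlib

open MeasureTheory Set Metric ENNReal

noncomputable section HLS

namespace Stmt16Aux

abbrev E3 := EuclideanSpace ℝ (Fin 3)

/-! ### Elementary one-dimensional integral computations -/

lemma Kd {d : ℝ} (hd : 0 < d) :
    ∫⁻ r in Ioi (0:ℝ), (if d < r then ENNReal.ofReal (r ^ (-2:ℝ)) else 0)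
      = ENNReal.ofReal d⁻¹ := by
  have h1 : ∀ r : ℝ, (if d < r then ENNReal.ofReal (r ^ (-2:ℝ)) else 0)
      = (Ioi d).indicator (fun r => ENNReal.ofReal (r ^ (-2:ℝ))) r := by
    intro r; simp [indicator_apply, mem_Ioi]
  simp_rw [h1]
  rw [lintegral_indicator measurableSet_Ioi, Measure.restrict_restrict measurableSet_Ioi,
    Set.inter_eq_left.2 (Ioi_subset_Ioi hd.le)]
  rw [← ofReal_integral_eq_lintegral_ofReal (integrableOn_Ioi_rpow_of_lt (by norm_num) hd)]
  · rw [integral_Ioi_rpow_of_lt (by norm_num) hd]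
    norm_num [Real.rpow_neg_one]
  · filter_upwards [self_mem_ae_restrict (measurableSet_Ioi : MeasurableSet (Ioi d))] with r hr
    exact Real.rpow_nonneg (hd.trans hr).le _

lemma Kd' {d : ℝ} (hd : 0 < d) :
    ∫⁻ r in Ioi d, ENNReal.ofReal (r ^ (-2:ℝ)) = ENNReal.ofReal d⁻¹ := by
  rw [← ofReal_integral_eq_lintegral_ofReal (integrableOn_Ioi_rpow_of_lt (by norm_num) hd)]
  · rw [integral_Ioi_rpow_of_lt (by norm_num) hd]
    norm_num [Real.rpow_neg_one]
  · filter_upwards [self_mem_ae_restrict (measurableSet_Ioi : MeasurableSet (Ioi d))] with r hr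
    exact Real.rpow_nonneg (hd.trans hr).le _

lemma Ioc_rpow_int {a : ℝ} (ha : 0 < a) :
    ∫⁻ b in Ioc (0:ℝ) a, ENNReal.ofReal (b ^ (-(4:ℝ)/5))
      = ENNReal.ofReal (5 * a ^ ((1:ℝ)/5)) := by
  have hii : IntervalIntegrable (fun x : ℝ => x ^ (-(4:ℝ)/5)) volume 0 a :=
    intervalIntegral.intervalIntegrable_rpow' (by norm_num)
  have hint : IntegrableOn (fun x : ℝ => x ^ (-(4:ℝ)/5)) (Ioc 0 a) :=
    (intervalIntegrable_iff_integrableOn_Ioc_of_le ha.le).1 hii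
  rw [← ofReal_integral_eq_lintegral_ofReal hint]
  · have := intervalIntegral.integral_of_le (μ := volume)
      (f := fun x : ℝ => x ^ (-(4:ℝ)/5)) ha.le
    rw [← this, integral_rpow (Or.inl (by norm_num))]
    norm_num
    rw [div_eq_mul_inv, mul_comm]
    norm_num
  · filter_upwards [self_mem_ae_restrict (measurableSet_Ioc : MeasurableSet (Ioc (0:ℝ) a))]
      with r hr
    exact Real.rpow_nonneg hr.1.le _

lemma lin_if_const {t : ℝ} (ht : 0 ≤ t) (c : ℝ≥0∞) :
    ∫⁻ s in Ioi (0:ℝ), (if s < t then c else 0) = c * ENNReal.ofReal t := by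
  have h1 : ∀ s : ℝ, (if s < t then c else 0) = (Iio t).indicator (fun _ => c) s := by
    intro s; by_cases h : s < t <;> simp [h]
  simp_rw [h1]
  rw [lintegral_indicator measurableSet_Iio, Measure.restrict_restrict measurableSet_Iio,
    setLIntegral_const]
  congr 1
  rw [show Iio t ∩ Ioi (0:ℝ) = Ioo 0 t by rw [inter_comm, Ioi_inter_Iio],
    Real.volume_Ioo, sub_zero]

/-! ### Chebyshev and layer-cake -/

variable {α : Type*} [MeasurableSpace α]

lemma chebyshev {P : Measure α} {f : α → ℝ} (hf : Measurable f) {b : ℝ} (hb : 0 < b) :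
    P {x | b < f x} ≤ (∫⁻ x, ENNReal.ofReal (f x ^ ((6:ℝ)/5)) ∂P)
      * ENNReal.ofReal (b ^ (-(6:ℝ)/5)) := by
  set A := ∫⁻ x, ENNReal.ofReal (f x ^ ((6:ℝ)/5)) ∂P
  set ε := ENNReal.ofReal (b ^ ((6:ℝ)/5)) with hε
  have hεpos : 0 < b ^ ((6:ℝ)/5) := Real.rpow_pos_of_pos hb _
  have hε0 : ε ≠ 0 := by positivity
  have hεt : ε ≠ ⊤ := ENNReal.ofReal_ne_top
  have key : ε * P {x | b < f x} ≤ A := by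
    have hsub : {x | b < f x} ⊆ {x | ε ≤ ENNReal.ofReal (f x ^ ((6:ℝ)/5))} := by
      intro x hx
      exact ENNReal.ofReal_le_ofReal
        (Real.rpow_le_rpow hb.le (le_of_lt hx) (by norm_num))
    calc ε * P {x | b < f x} ≤ ε * P {x | ε ≤ ENNReal.ofReal (f x ^ ((6:ℝ)/5))} :=
          mul_le_mul_right (measure_mono hsub) ε
      _ ≤ A := mul_meas_ge_le_lintegral₀
          (((hf.pow measurable_const).ennreal_ofReal.aemeasurable)) ε
  have : P {x | b < f x} = ε⁻¹ * (ε * P {x | b < f x}) := by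
    rw [← mul_assoc, ENNReal.inv_mul_cancel hε0 hεt, one_mul]
  rw [this]
  calc ε⁻¹ * (ε * P {x | b < f x}) ≤ ε⁻¹ * A := mul_le_mul_right key _
    _ = A * ε⁻¹ := mul_comm _ _
    _ = A * ENNReal.ofReal (b ^ (-(6:ℝ)/5)) := by
        rw [hε, ← ENNReal.ofReal_inv_of_pos hεpos, ← Real.rpow_neg hb.le]
        norm_num

lemma layercake {P : Measure α} {f : α → ℝ} (hf : Measurable f) (hf0 : ∀ x, 0 ≤ f x) :
    ∫⁻ t in Ioi (0:ℝ), P {x | t < f x} * ENNReal.ofReal (t ^ ((1:ℝ)/5))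
      ≤ ∫⁻ x, ENNReal.ofReal (f x ^ ((6:ℝ)/5)) ∂P := by
  rw [lintegral_rpow_eq_lintegral_meas_lt_mul P (Filter.Eventually.of_forall hf0)
    hf.aemeasurable (by norm_num : (0:ℝ) < 6/5)]
  have h15 : (6:ℝ)/5 - 1 = 1/5 := by norm_num
  rw [h15]
  nth_rewrite 1 [← one_mul (∫⁻ t in Ioi (0:ℝ), _)]
  gcongr
  exact ENNReal.one_le_ofReal.2 (by norm_num)

/-! ### The set-measure `I(a,b,r)` and its bounds -/

def Iabr (f : E3 → ℝ) (a b r : ℝ) : ℝ≥0∞ :=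
  (volume.prod volume) {z : E3 × E3 | a < f z.1 ∧ b < f z.2 ∧ dist z.1 z.2 < r}

lemma meas_set {f : E3 → ℝ} (hf : Measurable f) (a b r : ℝ) :
    MeasurableSet {z : E3 × E3 | a < f z.1 ∧ b < f z.2 ∧ dist z.1 z.2 < r} := by
  apply MeasurableSet.inter
  · exact measurableSet_lt measurable_const (hf.comp measurable_fst)
  apply MeasurableSet.inter
  · exact measurableSet_lt measurable_const (hf.comp measurable_snd)
  · exact measurableSet_lt measurable_dist measurable_const

lemma Ibound1 (f : E3 → ℝ) (a b r : ℝ) :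
    Iabr f a b r ≤ volume {x | a < f x} * volume {x | b < f x} := by
  unfold Iabr; rw [← Measure.prod_prod]
  apply measure_mono
  intro z hz
  exact ⟨hz.1, hz.2.1⟩

lemma ball_vol (x : E3) {r : ℝ} (hr : 0 ≤ r) :
    volume (ball x r) = ENNReal.ofReal (r^3) * volume (ball (0:E3) 1) := by
  rw [Measure.addHaar_ball_center, Measure.addHaar_ball volume 0 hr,
    finrank_euclideanSpace_fin]

lemma Ibound2 {f : E3 → ℝ} (hf : Measurable f) (a b : ℝ) {r : ℝ} (hr : 0 ≤ r) :
    Iabr f a b r ≤ ENNReal.ofReal (r^3) * volume (ball (0:E3) 1) * volume {x | a < f x} := by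
  unfold Iabr; rw [Measure.prod_apply (meas_set hf a b r)]
  set c := ENNReal.ofReal (r^3) * volume (ball (0:E3) 1) with hc
  have hpt : ∀ x : E3, volume (Prod.mk x ⁻¹' {z : E3 × E3 | a < f z.1 ∧ b < f z.2 ∧ dist z.1 z.2 < r})
      ≤ ({x | a < f x}).indicator (fun _ => c) x := by
    intro x
    by_cases hx : a < f x
    · rw [indicator_of_mem (show x ∈ {x | a < f x} from hx)]
      calc volume (Prod.mk x ⁻¹' {z : E3 × E3 | a < f z.1 ∧ b < f z.2 ∧ dist z.1 z.2 < r})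
          ≤ volume (ball x r) := by
            apply measure_mono; intro y hy
            simpa [mem_ball, dist_comm] using hy.2.2
        _ = c := ball_vol x hr
    · have : Prod.mk x ⁻¹' {z : E3 × E3 | a < f z.1 ∧ b < f z.2 ∧ dist z.1 z.2 < r} = ∅ := by
        ext y; simp [hx]
      simp [this]
  calc ∫⁻ x, volume (Prod.mk x ⁻¹' {z : E3 × E3 | a < f z.1 ∧ b < f z.2 ∧ dist z.1 z.2 < r})
      ≤ ∫⁻ x, ({x | a < f x}).indicator (fun _ => c) x := lintegral_mono hpt
    _ = c * volume {x | a < f x} := lintegral_indicator_const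
        (measurableSet_lt measurable_const hf) c

lemma Ibound3 {f : E3 → ℝ} (hf : Measurable f) (a b : ℝ) {r : ℝ} (hr : 0 ≤ r) :
    Iabr f a b r ≤ ENNReal.ofReal (r^3) * volume (ball (0:E3) 1) * volume {x | b < f x} := by
  unfold Iabr; rw [Measure.prod_apply_symm (meas_set hf a b r)]
  set c := ENNReal.ofReal (r^3) * volume (ball (0:E3) 1) with hc
  have hpt : ∀ y : E3, volume ((fun x => (x, y)) ⁻¹' {z : E3 × E3 | a < f z.1 ∧ b < f z.2 ∧ dist z.1 z.2 < r})
      ≤ ({x | b < f x}).indicator (fun _ => c) y := by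
    intro y
    by_cases hy : b < f y
    · rw [indicator_of_mem (show y ∈ {x | b < f x} from hy)]
      calc volume ((fun x => (x, y)) ⁻¹' {z : E3 × E3 | a < f z.1 ∧ b < f z.2 ∧ dist z.1 z.2 < r})
          ≤ volume (ball y r) := by
            apply measure_mono; intro x hx
            simpa [mem_ball, dist_comm] using hx.2.2
        _ = c := ball_vol y hr
    · have : (fun x => (x, y)) ⁻¹' {z : E3 × E3 | a < f z.1 ∧ b < f z.2 ∧ dist z.1 z.2 < r} = ∅ := by
        ext x; simp [hy]
      simp [this]
  calc ∫⁻ y, volume ((fun x => (x, y)) ⁻¹' {z : E3 × E3 | a < f z.1 ∧ b < f z.2 ∧ dist z.1 z.2 < r})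
      ≤ ∫⁻ y, ({x | b < f x}).indicator (fun _ => c) y := lintegral_mono hpt
    _ = c * volume {x | b < f x} := lintegral_indicator_const
        (measurableSet_lt measurable_const hf) c

/-! ### The radial integral bound -/

lemma Jbound {I : ℝ → ℝ≥0∞} {ma mb B : ℝ≥0∞}
    (h1 : ∀ r, I r ≤ ma * mb)
    (h2 : ∀ r : ℝ, 0 < r → I r ≤ ENNReal.ofReal (r^3) * B * ma)
    (h3 : ∀ r : ℝ, 0 < r → I r ≤ ENNReal.ofReal (r^3) * B * mb) :
    ∫⁻ r in Ioi (0:ℝ), ENNReal.ofReal (r ^ (-2:ℝ)) * I r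
      ≤ (B + 1) * (min ma mb * max ma mb ^ ((2:ℝ)/3)) := by
  set m := min ma mb with hm
  set M := max ma mb with hM
  have hmin : ∀ r : ℝ, 0 < r → I r ≤ ENNReal.ofReal (r^3) * B * m := by
    intro r hr
    rcases min_cases ma mb with ⟨h, _⟩ | ⟨h, _⟩
    · rw [hm, h]; exact h2 r hr
    · rw [hm, h]; exact h3 r hr
  have hprod : ∀ r, I r ≤ m * M := by
    intro r; rw [hm, hM, min_mul_max]; exact h1 r
  by_cases hm0 : m = 0
  · have hI0 : ∀ r : ℝ, 0 < r → I r = 0 := by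
      intro r hr
      exact le_antisymm (by simpa [hm0] using hmin r hr) (zero_le)
    have : ∫⁻ r in Ioi (0:ℝ), ENNReal.ofReal (r ^ (-2:ℝ)) * I r = 0 := by
      rw [← lintegral_zero (μ := volume.restrict (Ioi (0:ℝ)))]
      apply lintegral_congr_ae
      filter_upwards [self_mem_ae_restrict (measurableSet_Ioi : MeasurableSet (Ioi (0:ℝ)))]
        with r hr
      rw [hI0 r hr, mul_zero]
    rw [this]; exact zero_le
  · by_cases hMtop : M = ⊤
    · have : (B + 1) * (m * M ^ ((2:ℝ)/3)) = ⊤ := by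
        rw [hMtop, ENNReal.top_rpow_of_pos (by norm_num)]
        rw [ENNReal.mul_top hm0, ENNReal.mul_top]
        simp
      rw [this]; exact le_top
    · have hM0 : M ≠ 0 := by
        intro h
        exact hm0 (le_antisymm (le_trans (min_le_max) h.le) (zero_le))
      have hMr : 0 < M.toReal := ENNReal.toReal_pos hM0 hMtop
      set R := M.toReal ^ ((1:ℝ)/3) with hRdef
      have hR : 0 < R := Real.rpow_pos_of_pos hMr _
      have hRM : ENNReal.ofReal (R * R) = M ^ ((2:ℝ)/3) := by
        rw [show R * R = M.toReal ^ ((2:ℝ)/3) by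
          rw [hRdef, ← Real.rpow_add hMr]; norm_num]
        rw [← ENNReal.ofReal_rpow_of_pos hMr, ENNReal.ofReal_toReal hMtop]
      have hRinv : ENNReal.ofReal R⁻¹ = M ^ (-(1:ℝ)/3) := by
        have h1 : R⁻¹ = M.toReal ^ (-(1:ℝ)/3) := by
          rw [hRdef, ← Real.rpow_neg hMr.le]; norm_num
        rw [h1, ← ENNReal.ofReal_rpow_of_pos hMr, ENNReal.ofReal_toReal hMtop]
      rw [← Ioc_union_Ioi_eq_Ioi hR.le, lintegral_union measurableSet_Ioi Ioc_disjoint_Ioi_same]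
      have part1 : ∫⁻ r in Ioc (0:ℝ) R, ENNReal.ofReal (r ^ (-2:ℝ)) * I r
          ≤ B * (m * M ^ ((2:ℝ)/3)) := by
        calc ∫⁻ r in Ioc (0:ℝ) R, ENNReal.ofReal (r ^ (-2:ℝ)) * I r
            ≤ ∫⁻ _ in Ioc (0:ℝ) R, ENNReal.ofReal R * (B * m) := by
              apply setLIntegral_mono' measurableSet_Ioc
              intro r hr
              calc ENNReal.ofReal (r ^ (-2:ℝ)) * I r
                  ≤ ENNReal.ofReal (r ^ (-2:ℝ)) * (ENNReal.ofReal (r^3) * B * m) :=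
                    mul_le_mul_right (hmin r hr.1) _
                _ = ENNReal.ofReal (r ^ (-2:ℝ) * r^3) * (B * m) := by
                    rw [ENNReal.ofReal_mul (Real.rpow_nonneg hr.1.le _)]; ring
                _ = ENNReal.ofReal r * (B * m) := by
                    congr 1
                    rw [show r ^ (-2:ℝ) * r^3 = r by
                      have hrne : r ≠ 0 := ne_of_gt hr.1
                      rw [Real.rpow_neg hr.1.le, show (2:ℝ) = ((2:ℕ):ℝ) by norm_num,
                        Real.rpow_natCast]
                      field_simp]
                _ ≤ ENNReal.ofReal R * (B * m) :=
                    mul_le_mul_left (ENNReal.ofReal_le_ofReal hr.2) _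
          _ = ENNReal.ofReal R * (B * m) * volume (Ioc (0:ℝ) R) := setLIntegral_const _ _
          _ = B * (m * ENNReal.ofReal (R * R)) := by
              rw [Real.volume_Ioc, sub_zero, ENNReal.ofReal_mul hR.le]; ring
          _ = B * (m * M ^ ((2:ℝ)/3)) := by rw [hRM]
      have part2 : ∫⁻ r in Ioi R, ENNReal.ofReal (r ^ (-2:ℝ)) * I r
          ≤ 1 * (m * M ^ ((2:ℝ)/3)) := by
        calc ∫⁻ r in Ioi R, ENNReal.ofReal (r ^ (-2:ℝ)) * I r
            ≤ ∫⁻ r in Ioi R, ENNReal.ofReal (r ^ (-2:ℝ)) * (m * M) := by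
              apply setLIntegral_mono' measurableSet_Ioi
              intro r _
              exact mul_le_mul_right (hprod r) _
          _ = (m * M) * ∫⁻ r in Ioi R, ENNReal.ofReal (r ^ (-2:ℝ)) := by
              rw [lintegral_mul_const' _ _ (by
                exact ENNReal.mul_ne_top (ne_top_of_le_ne_top hMtop (min_le_max)) hMtop),
                mul_comm]
          _ = (m * M) * M ^ (-(1:ℝ)/3) := by rw [Kd' hR, hRinv]
          _ = m * (M ^ (1:ℝ) * M ^ (-(1:ℝ)/3)) := by rw [ENNReal.rpow_one]; ring
          _ = 1 * (m * M ^ ((2:ℝ)/3)) := by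
              rw [← ENNReal.rpow_add _ _ hM0 hMtop]
              norm_num
      calc _ ≤ B * (m * M ^ ((2:ℝ)/3)) + 1 * (m * M ^ ((2:ℝ)/3)) := add_le_add part1 part2
        _ = (B + 1) * (m * M ^ ((2:ℝ)/3)) := by ring

/-! ### The (a,b)-integral bound -/

lemma oneSide {μ : ℝ → ℝ≥0∞} {A : ℝ≥0∞} (hμ : Measurable μ)
    (hcheb : ∀ b : ℝ, 0 < b → μ b ≤ A * ENNReal.ofReal (b ^ (-(6:ℝ)/5)))
    (hlayer : ∫⁻ t in Ioi (0:ℝ), μ t * ENNReal.ofReal (t ^ ((1:ℝ)/5)) ≤ A) :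
    ∫⁻ a in Ioi (0:ℝ), ∫⁻ b in Ioi (0:ℝ), (if b ≤ a then μ a * μ b ^ ((2:ℝ)/3) else 0)
      ≤ 5 * A ^ ((5:ℝ)/3) := by
  have inner_bound : ∀ a : ℝ, 0 < a →
      (∫⁻ b in Ioi (0:ℝ), (if b ≤ a then μ a * μ b ^ ((2:ℝ)/3) else 0))
        ≤ μ a * (A ^ ((2:ℝ)/3) * ENNReal.ofReal (5 * a ^ ((1:ℝ)/5))) := by
    intro a ha
    have step1 : (∫⁻ b in Ioi (0:ℝ), (if b ≤ a then μ a * μ b ^ ((2:ℝ)/3) else 0))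
        = μ a * ∫⁻ b in Ioi (0:ℝ), (if b ≤ a then μ b ^ ((2:ℝ)/3) else 0) := by
      rw [← lintegral_const_mul _ (by
        exact Measurable.ite measurableSet_Iic ((hμ.pow measurable_const)) measurable_const)]
      congr 1 with b
      by_cases h : b ≤ a <;> simp [h]
    rw [step1]
    apply mul_le_mul_right
    have step2 : (∫⁻ b in Ioi (0:ℝ), (if b ≤ a then μ b ^ ((2:ℝ)/3) else 0))
        = ∫⁻ b in Ioc (0:ℝ) a, μ b ^ ((2:ℝ)/3) := by
      have : ∀ b : ℝ, (if b ≤ a then μ b ^ ((2:ℝ)/3) else 0)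
          = (Iic a).indicator (fun b => μ b ^ ((2:ℝ)/3)) b := by
        intro b; by_cases h : b ≤ a <;> simp [h, indicator_apply, mem_Iic]
      simp_rw [this]
      rw [lintegral_indicator measurableSet_Iic, Measure.restrict_restrict measurableSet_Iic]
      congr 1
      rw [Set.inter_comm, Ioi_inter_Iic]
    rw [step2]
    calc ∫⁻ b in Ioc (0:ℝ) a, μ b ^ ((2:ℝ)/3)
        ≤ ∫⁻ b in Ioc (0:ℝ) a, A ^ ((2:ℝ)/3) * ENNReal.ofReal (b ^ (-(4:ℝ)/5)) := by
          apply setLIntegral_mono' measurableSet_Ioc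
          intro b hb
          calc μ b ^ ((2:ℝ)/3)
              ≤ (A * ENNReal.ofReal (b ^ (-(6:ℝ)/5))) ^ ((2:ℝ)/3) :=
                ENNReal.rpow_le_rpow (hcheb b hb.1) (by norm_num)
            _ = A ^ ((2:ℝ)/3) * ENNReal.ofReal (b ^ (-(4:ℝ)/5)) := by
                rw [ENNReal.mul_rpow_of_nonneg _ _ (by norm_num : (0:ℝ) ≤ 2/3)]
                congr 1
                rw [ENNReal.ofReal_rpow_of_pos (Real.rpow_pos_of_pos hb.1 _),
                  ← Real.rpow_mul hb.1.le]
                norm_num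
      _ = A ^ ((2:ℝ)/3) * ENNReal.ofReal (5 * a ^ ((1:ℝ)/5)) := by
          rw [lintegral_const_mul _ (show Measurable fun b : ℝ =>
              ENNReal.ofReal (b ^ (-(4:ℝ)/5)) from
              (measurable_id.pow measurable_const).ennreal_ofReal),
            Ioc_rpow_int ha]
  calc ∫⁻ a in Ioi (0:ℝ), ∫⁻ b in Ioi (0:ℝ), (if b ≤ a then μ a * μ b ^ ((2:ℝ)/3) else 0)
      ≤ ∫⁻ a in Ioi (0:ℝ), μ a * (A ^ ((2:ℝ)/3) * ENNReal.ofReal (5 * a ^ ((1:ℝ)/5))) :=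
        setLIntegral_mono' measurableSet_Ioi fun a ha => inner_bound a ha
    _ = (A ^ ((2:ℝ)/3) * 5) * ∫⁻ a in Ioi (0:ℝ), μ a * ENNReal.ofReal (a ^ ((1:ℝ)/5)) := by
        rw [← lintegral_const_mul _ (show Measurable fun a : ℝ =>
            μ a * ENNReal.ofReal (a ^ ((1:ℝ)/5)) from
            hμ.mul ((measurable_id.pow measurable_const).ennreal_ofReal))]
        congr 1 with a
        rw [ENNReal.ofReal_mul (by norm_num : (0:ℝ) ≤ 5)]
        have h5 : ENNReal.ofReal (5:ℝ) = (5:ℝ≥0∞) := by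
          norm_num
        rw [h5]; ring
    _ ≤ (A ^ ((2:ℝ)/3) * 5) * A := mul_le_mul_right hlayer _
    _ = 5 * A ^ ((5:ℝ)/3) := by
        have hA : A ^ ((5:ℝ)/3) = A ^ ((2:ℝ)/3) * A ^ (1:ℝ) := by
          rw [← ENNReal.rpow_add_of_nonneg ((2:ℝ)/3) (1:ℝ) (by norm_num) (by norm_num)]
          norm_num
        rw [hA, ENNReal.rpow_one]
        ring

variable {f : E3 → ℝ}

lemma reduce (hf : Measurable f) (hf0 : ∀ x, 0 ≤ f x) :
    (∫⁻ x, ∫⁻ y, ENNReal.ofReal (f x * f y / dist x y)) ≤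
      ∫⁻ a in Ioi (0:ℝ), ∫⁻ b in Ioi (0:ℝ), ∫⁻ r in Ioi (0:ℝ),
        ENNReal.ofReal (r ^ (-2:ℝ)) * Iabr f a b r := by
  set P := (volume : Measure E3).prod (volume : Measure E3) with hP
  set ν := volume.restrict (Ioi (0:ℝ)) with hν
  set Ω : Set ((E3 × E3) × ℝ × ℝ × ℝ) :=
    {p | p.2.1 < f p.1.1 ∧ p.2.2.1 < f p.1.2 ∧ dist p.1.1 p.1.2 < p.2.2.2} with hΩdef
  have hΩ : MeasurableSet Ω := by
    apply MeasurableSet.inter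
    · exact measurableSet_lt measurable_snd.fst (hf.comp measurable_fst.fst)
    apply MeasurableSet.inter
    · exact measurableSet_lt measurable_snd.snd.fst (hf.comp measurable_fst.snd)
    · exact measurableSet_lt (measurable_fst.fst.dist measurable_fst.snd)
        measurable_snd.snd.snd
  set gg : ((E3 × E3) × ℝ × ℝ × ℝ) → ℝ≥0∞ :=
    fun q => ENNReal.ofReal (q.2.2.2 ^ (-2:ℝ)) with hggdef
  have hggm : Measurable gg := (measurable_snd.snd.snd.pow measurable_const).ennreal_ofReal
  set G : (E3 × E3) → (ℝ × ℝ × ℝ) → ℝ≥0∞ := fun z w => Ω.indicator gg (z, w) with hGdef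
  have hGm : Measurable (Function.uncurry G) := by
    have : Function.uncurry G = Ω.indicator gg := rfl
    rw [this]
    exact hggm.indicator hΩ
  have hG_if : ∀ z w, G z w = if ((z, w) ∈ Ω) then ENNReal.ofReal (w.2.2 ^ (-2:ℝ)) else 0 := by
    intro z w; simp [hGdef, hggdef, indicator_apply]
  -- pointwise bound
  have key : ∀ z : E3 × E3,
      ENNReal.ofReal (f z.1 * f z.2 / dist z.1 z.2)
        ≤ ∫⁻ w, G z w ∂(ν.prod (ν.prod ν)) := by
    intro z
    obtain ⟨x, y⟩ := z
    rcases eq_or_lt_of_le (dist_nonneg (x := x) (y := y)) with hd | hd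
    · rw [← hd]
      simp
    · have e1 : (∫⁻ w, G (x, y) w ∂(ν.prod (ν.prod ν)))
          = ∫⁻ a, (∫⁻ w', G (x, y) (a, w') ∂(ν.prod ν)) ∂ν :=
        lintegral_prod _ (hGm.comp measurable_prodMk_left).aemeasurable
      have e2 : ∀ a : ℝ, (∫⁻ w', G (x, y) (a, w') ∂(ν.prod ν))
          = ∫⁻ b, (∫⁻ r, G (x, y) (a, b, r) ∂ν) ∂ν := by
        intro a
        exact lintegral_prod _ ((hGm.comp measurable_prodMk_left).comp
          measurable_prodMk_left).aemeasurable
      rw [e1]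
      simp_rw [e2]
      have e3 : ∀ a b r : ℝ, G (x, y) (a, b, r)
          = if a < f x ∧ b < f y ∧ dist x y < r then ENNReal.ofReal (r ^ (-2:ℝ)) else 0 := by
        intro a b r
        rw [hG_if]
        rfl
      simp_rw [e3]
      have e4 : ∀ a : ℝ, (∫⁻ b, (∫⁻ r,
          (if a < f x ∧ b < f y ∧ dist x y < r then ENNReal.ofReal (r ^ (-2:ℝ)) else 0) ∂ν) ∂ν)
          = if a < f x then (∫⁻ b, (∫⁻ r,
              (if b < f y ∧ dist x y < r then ENNReal.ofReal (r ^ (-2:ℝ)) else 0) ∂ν) ∂ν)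
            else 0 := by
        intro a
        by_cases h : a < f x
        · simp only [h, true_and, if_true]
        · simp only [h, false_and, if_false]
          simp
      simp_rw [e4]
      have e5 : ∀ b : ℝ, (∫⁻ r,
          (if b < f y ∧ dist x y < r then ENNReal.ofReal (r ^ (-2:ℝ)) else 0) ∂ν)
          = if b < f y then (∫⁻ r,
              (if dist x y < r then ENNReal.ofReal (r ^ (-2:ℝ)) else 0) ∂ν)
            else 0 := by
        intro b
        by_cases h : b < f y
        · simp only [h, true_and, if_true]
        · simp only [h, false_and, if_false]
          simp
      simp_rw [e5]
      rw [hν, Kd hd, lin_if_const (hf0 y), lin_if_const (hf0 x)]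
      rw [div_eq_mul_inv, ENNReal.ofReal_mul (mul_nonneg (hf0 x) (hf0 y)),
        ENNReal.ofReal_mul (hf0 x), ENNReal.ofReal_inv_of_pos hd]
      ring_nf
      exact le_refl _
  have hφ : Measurable (fun z : E3 × E3 => ENNReal.ofReal (f z.1 * f z.2 / dist z.1 z.2)) :=
    (((hf.comp measurable_fst).mul (hf.comp measurable_snd)).div measurable_dist).ennreal_ofReal
  have hIabr_meas : Measurable (fun w : ℝ × ℝ × ℝ => Iabr f w.1 w.2.1 w.2.2) := by
    have : (fun w : ℝ × ℝ × ℝ => Iabr f w.1 w.2.1 w.2.2)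
        = fun w => P ((fun z : E3 × E3 => (z, w)) ⁻¹' Ω) := rfl
    rw [this]
    exact measurable_measure_prodMk_right hΩ
  calc (∫⁻ x, ∫⁻ y, ENNReal.ofReal (f x * f y / dist x y))
      = ∫⁻ z, ENNReal.ofReal (f z.1 * f z.2 / dist z.1 z.2) ∂P :=
        (lintegral_prod _ hφ.aemeasurable).symm
    _ ≤ ∫⁻ z, (∫⁻ w, G z w ∂(ν.prod (ν.prod ν))) ∂P := lintegral_mono key
    _ = ∫⁻ w, (∫⁻ z, G z w ∂P) ∂(ν.prod (ν.prod ν)) :=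
        lintegral_lintegral_swap hGm.aemeasurable
    _ = ∫⁻ w, ENNReal.ofReal (w.2.2 ^ (-2:ℝ)) * Iabr f w.1 w.2.1 w.2.2
          ∂(ν.prod (ν.prod ν)) := by
        apply lintegral_congr
        intro w
        have hsec : (fun z : E3 × E3 => G z w)
            = ({z : E3 × E3 | w.1 < f z.1 ∧ w.2.1 < f z.2 ∧ dist z.1 z.2 < w.2.2}).indicator
                (fun _ => ENNReal.ofReal (w.2.2 ^ (-2:ℝ))) := by
          funext z
          rw [hG_if]
          by_cases h : w.1 < f z.1 ∧ w.2.1 < f z.2 ∧ dist z.1 z.2 < w.2.2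
          · rw [indicator_of_mem (show z ∈ {z : E3 × E3 | w.1 < f z.1 ∧ w.2.1 < f z.2 ∧
                dist z.1 z.2 < w.2.2} from h), if_pos (show (z, w) ∈ Ω from h)]
          · rw [indicator_of_notMem (show z ∉ {z : E3 × E3 | w.1 < f z.1 ∧ w.2.1 < f z.2 ∧
                dist z.1 z.2 < w.2.2} from h), if_neg (show (z, w) ∉ Ω from h)]
        rw [hsec, lintegral_indicator_const (meas_set hf _ _ _)]
        rfl
    _ = ∫⁻ a, (∫⁻ b, (∫⁻ r,
          ENNReal.ofReal (r ^ (-2:ℝ)) * Iabr f a b r ∂ν) ∂ν) ∂ν := by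
        have hH : Measurable (fun w : ℝ × ℝ × ℝ =>
            ENNReal.ofReal (w.2.2 ^ (-2:ℝ)) * Iabr f w.1 w.2.1 w.2.2) :=
          ((measurable_snd.snd.pow measurable_const).ennreal_ofReal).mul hIabr_meas
        have h1 : (∫⁻ w, ENNReal.ofReal (w.2.2 ^ (-2:ℝ)) * Iabr f w.1 w.2.1 w.2.2
            ∂(ν.prod (ν.prod ν)))
            = ∫⁻ a, (∫⁻ w', ENNReal.ofReal (w'.2 ^ (-2:ℝ)) * Iabr f a w'.1 w'.2
                ∂(ν.prod ν)) ∂ν :=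
          lintegral_prod _ hH.aemeasurable
        rw [h1]
        apply lintegral_congr
        intro a
        exact lintegral_prod _ ((hH.comp measurable_prodMk_left).aemeasurable)


/-! ### Main inequality for a nonnegative function -/

lemma main {f : E3 → ℝ} (hf : Measurable f) (hf0 : ∀ x, 0 ≤ f x) :
    (∫⁻ x, ∫⁻ y, ENNReal.ofReal (f x * f y / dist x y)) ≤
      ENNReal.ofReal (10 * ((volume (ball (0:E3) 1)).toReal + 1)) *
        (∫⁻ x, ENNReal.ofReal (f x ^ ((6:ℝ)/5))) ^ ((5:ℝ)/3) := by
  set B := volume (ball (0:E3) 1) with hBdef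
  have hBtop : B ≠ ⊤ := measure_ball_lt_top.ne
  have hB1top : B + 1 ≠ ⊤ := ENNReal.add_ne_top.2 ⟨hBtop, ENNReal.one_ne_top⟩
  set A := ∫⁻ x, ENNReal.ofReal (f x ^ ((6:ℝ)/5)) with hAdef
  set μm : ℝ → ℝ≥0∞ := fun t => volume {x | t < f x} with hμdef
  have hμanti : Antitone μm := by
    intro s t hst
    exact measure_mono (fun x hx => lt_of_le_of_lt hst hx)
  have hμm : Measurable μm := hμanti.measurable
  have hch : ∀ b : ℝ, 0 < b → μm b ≤ A * ENNReal.ofReal (b ^ (-(6:ℝ)/5)) :=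
    fun b hb => chebyshev hf hb
  have hlay : ∫⁻ t in Ioi (0:ℝ), μm t * ENNReal.ofReal (t ^ ((1:ℝ)/5)) ≤ A :=
    layercake hf hf0
  have h12 : Measurable (fun p : ℝ × ℝ =>
      if p.2 ≤ p.1 then μm p.1 * μm p.2 ^ ((2:ℝ)/3) else 0) :=
    Measurable.ite (measurableSet_le measurable_snd measurable_fst)
      ((hμm.comp measurable_fst).mul ((hμm.comp measurable_snd).pow measurable_const))
      measurable_const
  have h21 : Measurable (fun p : ℝ × ℝ =>
      if p.1 ≤ p.2 then μm p.2 * μm p.1 ^ ((2:ℝ)/3) else 0) :=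
    Measurable.ite (measurableSet_le measurable_fst measurable_snd)
      ((hμm.comp measurable_snd).mul ((hμm.comp measurable_fst).pow measurable_const))
      measurable_const
  have hminmax : ∀ a b : ℝ, min (μm a) (μm b) * max (μm a) (μm b) ^ ((2:ℝ)/3)
      ≤ (if b ≤ a then μm a * μm b ^ ((2:ℝ)/3) else 0)
        + (if a ≤ b then μm b * μm a ^ ((2:ℝ)/3) else 0) := by
    intro a b
    rcases le_total b a with h | h
    · have h' : μm a ≤ μm b := hμanti h
      rw [min_eq_left h', max_eq_right h', if_pos h]
      exact le_self_add
    · have h' : μm b ≤ μm a := hμanti h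
      rw [min_eq_right h', max_eq_left h', if_pos h]
      exact le_add_self
  have habsum : ∫⁻ a in Ioi (0:ℝ), ∫⁻ b in Ioi (0:ℝ),
      (min (μm a) (μm b) * max (μm a) (μm b) ^ ((2:ℝ)/3)) ≤ 10 * A ^ ((5:ℝ)/3) := by
    have hT1 : ∫⁻ a in Ioi (0:ℝ), ∫⁻ b in Ioi (0:ℝ),
        (if b ≤ a then μm a * μm b ^ ((2:ℝ)/3) else 0) ≤ 5 * A ^ ((5:ℝ)/3) :=
      oneSide hμm hch hlay
    have hT2 : ∫⁻ a in Ioi (0:ℝ), ∫⁻ b in Ioi (0:ℝ),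
        (if a ≤ b then μm b * μm a ^ ((2:ℝ)/3) else 0) ≤ 5 * A ^ ((5:ℝ)/3) := by
      rw [lintegral_lintegral_swap h21.aemeasurable]
      exact oneSide hμm hch hlay
    calc ∫⁻ a in Ioi (0:ℝ), ∫⁻ b in Ioi (0:ℝ),
          (min (μm a) (μm b) * max (μm a) (μm b) ^ ((2:ℝ)/3))
        ≤ ∫⁻ a in Ioi (0:ℝ), ∫⁻ b in Ioi (0:ℝ),
            ((if b ≤ a then μm a * μm b ^ ((2:ℝ)/3) else 0)
              + (if a ≤ b then μm b * μm a ^ ((2:ℝ)/3) else 0)) :=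
          lintegral_mono fun a => lintegral_mono fun b => hminmax a b
      _ = (∫⁻ a in Ioi (0:ℝ), ∫⁻ b in Ioi (0:ℝ),
            (if b ≤ a then μm a * μm b ^ ((2:ℝ)/3) else 0))
          + ∫⁻ a in Ioi (0:ℝ), ∫⁻ b in Ioi (0:ℝ),
            (if a ≤ b then μm b * μm a ^ ((2:ℝ)/3) else 0) := by
          have hin : ∀ a : ℝ, (∫⁻ b in Ioi (0:ℝ),
              ((if b ≤ a then μm a * μm b ^ ((2:ℝ)/3) else 0)
                + (if a ≤ b then μm b * μm a ^ ((2:ℝ)/3) else 0)))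
              = (∫⁻ b in Ioi (0:ℝ), (if b ≤ a then μm a * μm b ^ ((2:ℝ)/3) else 0))
                + ∫⁻ b in Ioi (0:ℝ), (if a ≤ b then μm b * μm a ^ ((2:ℝ)/3) else 0) := by
            intro a
            exact lintegral_add_left (Measurable.ite
              (measurableSet_le measurable_id measurable_const)
              (measurable_const.mul (hμm.pow measurable_const)) measurable_const) _
          simp_rw [hin]
          exact lintegral_add_left (h12.lintegral_prod_right') _
      _ ≤ 5 * A ^ ((5:ℝ)/3) + 5 * A ^ ((5:ℝ)/3) := add_le_add hT1 hT2
      _ = 10 * A ^ ((5:ℝ)/3) := by ring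
  calc (∫⁻ x, ∫⁻ y, ENNReal.ofReal (f x * f y / dist x y))
      ≤ ∫⁻ a in Ioi (0:ℝ), ∫⁻ b in Ioi (0:ℝ), ∫⁻ r in Ioi (0:ℝ),
          ENNReal.ofReal (r ^ (-2:ℝ)) * Iabr f a b r := reduce hf hf0
    _ ≤ ∫⁻ a in Ioi (0:ℝ), ∫⁻ b in Ioi (0:ℝ),
          (B + 1) * (min (μm a) (μm b) * max (μm a) (μm b) ^ ((2:ℝ)/3)) := by
        apply lintegral_mono; intro a
        apply lintegral_mono; intro b
        exact Jbound (Ibound1 f a b) (fun r hr => Ibound2 hf a b hr.le)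
          (fun r hr => Ibound3 hf a b hr.le)
    _ = (B + 1) * ∫⁻ a in Ioi (0:ℝ), ∫⁻ b in Ioi (0:ℝ),
          (min (μm a) (μm b) * max (μm a) (μm b) ^ ((2:ℝ)/3)) := by
        rw [← lintegral_const_mul' _ _ hB1top]
        apply lintegral_congr
        intro a
        rw [← lintegral_const_mul' _ _ hB1top]
    _ ≤ (B + 1) * (10 * A ^ ((5:ℝ)/3)) := mul_le_mul_right habsum _
    _ = ENNReal.ofReal (10 * (B.toReal + 1)) * A ^ ((5:ℝ)/3) := by
        have hC : ENNReal.ofReal (10 * (B.toReal + 1)) = 10 * (B + 1) := by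
          rw [ENNReal.ofReal_mul (by norm_num : (0:ℝ) ≤ 10),
            ENNReal.ofReal_add ENNReal.toReal_nonneg zero_le_one,
            ENNReal.ofReal_toReal hBtop, ENNReal.ofReal_one]
          norm_num
        rw [hC]
        ring

end Stmt16Aux

end HLS

open Stmt16Aux in
/-- There is C > 0 such that for every measurable u : ℝ³ → ℝ,
∫∫ u(x)²u(y)²/|x−y| dx dy ≤ C (∫ |u|^{12/5})^{5/3}. -/
theorem stmt16 :
    ∃ C : ℝ, 0 < C ∧ ∀ u : EuclideanSpace ℝ (Fin 3) → ℝ, Measurable u →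
      (∫⁻ x, ∫⁻ y, ENNReal.ofReal ((u x) ^ 2 * (u y) ^ 2 / dist x y)
          ∂volume ∂volume) ≤
        ENNReal.ofReal C *
          (∫⁻ x, ENNReal.ofReal (|u x| ^ ((12 : ℝ) / 5)) ∂volume) ^ ((5 : ℝ) / 3) := by
  refine ⟨10 * ((volume (ball (0:EuclideanSpace ℝ (Fin 3)) 1)).toReal + 1), ?_, ?_⟩
  · have h := ENNReal.toReal_nonneg
      (a := volume (ball (0:EuclideanSpace ℝ (Fin 3)) 1))
    nlinarith
  · intro u hu
    have hf : Measurable fun x : E3 => u x ^ 2 := hu.pow_const 2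
    have hf0 : ∀ x : E3, 0 ≤ u x ^ 2 := fun x => sq_nonneg _
    have heq : (∫⁻ x : E3, ENNReal.ofReal (|u x| ^ ((12:ℝ)/5)))
        = ∫⁻ x : E3, ENNReal.ofReal ((u x ^ 2) ^ ((6:ℝ)/5)) := by
      apply lintegral_congr
      intro x
      congr 1
      rw [← sq_abs, ← Real.rpow_natCast |u x| 2, ← Real.rpow_mul (abs_nonneg _)]
      norm_num
    rw [heq]
    exact main hf hf0
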